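/- Let m ≥ 1 and B be positive integers and a_1, …, a_{3m} be positive integers with B/4 < a_i < B/2 for all i and Σ_{i=1}^{3m} a_i = mB. If there exists a schedule of the reduction tree T(a, B) on p = 3mB processors whose makespan is at most 2m+1 and whose peak memory is at most 3mB + 3m, then there exists a partition of {1, …, 3m} into m pairwise disjoint triples S_1, …, S_m such that Σ_{i ∈ S_k} a_i = B for every k. (Together with the converse direction, this reduction from 3-Partition shows that deciding whether a tree admits a schedule meeting given makespan and memory bounds is NP-complete, even in the pebble-game model.) -/

import Mathlib

/-- A finite rooted in-tree: every node has a parent (the root is its own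
parent), and a rank function witnesses that following parents strictly
decreases towards the root, so every node has a unique path to the root. -/
structure InTree where
  V : Type
  [fin : Fintype V]
  [deq : DecidableEq V]
  root : V
  parent : V → V
  parent_root : parent root = root
  rk : V → ℕ
  rk_lt : ∀ v, v ≠ root → rk (parent v) < rk v
  rk_root : ∀ v, rk v = 0 → v = root

attribute [instance] InTree.fin InTree.deq

/-- A schedule of `T` on `p` processors: at most `p` tasks per unit time step,
and every non-root task finishes before its parent starts. -/
def InTree.IsSchedule (T : InTree) (p : ℕ) (t : T.V → ℕ) : Prop :=
  (∀ s : ℕ, (Finset.univ.filter (fun i => t i = s)).card ≤ p) ∧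
  (∀ i : T.V, i ≠ T.root → t i + 1 ≤ t (T.parent i))

/-- Makespan of a schedule: `max_i (t i + 1)`. -/
def InTree.makespan (T : InTree) (t : T.V → ℕ) : ℕ :=
  Finset.univ.sup (fun i => t i + 1)

/-- Memory used at step `s`: number of nodes `i` with `t i ≤ s` that are the
root or whose parent has not finished before step `s`. -/
def InTree.memAt (T : InTree) (t : T.V → ℕ) (s : ℕ) : ℕ :=
  (Finset.univ.filter (fun i : T.V => t i ≤ s ∧ (i = T.root ∨ s ≤ t (T.parent i)))).card

/-- Peak memory of a schedule: maximum memory usage over steps `0 ≤ s < makespan`. -/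
def InTree.peakMemory (T : InTree) (t : T.V → ℕ) : ℕ :=
  (Finset.range (T.makespan t)).sup (T.memAt t)


/-- Node set of the 3-Partition reduction tree: a root, the nodes `N i`
(`i < 3m`), and for each `i` the `3m * a i` leaf children of `N i`. -/
abbrev RedV (m : ℕ) (a : Fin (3*m) → ℕ) : Type :=
  Unit ⊕ Fin (3*m) ⊕ (Σ i : Fin (3*m), Fin (3*m * a i))

/-- The reduction tree `T(a, B)`: a root whose children are the `N i`,
each `N i` having exactly `3m * a i` leaf children. -/
def redTree (m : ℕ) (a : Fin (3*m) → ℕ) : InTree where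
  V := RedV m a
  root := Sum.inl ()
  parent := fun v => match v with
    | Sum.inl _ => Sum.inl ()
    | Sum.inr (Sum.inl _) => Sum.inl ()
    | Sum.inr (Sum.inr ⟨i, _⟩) => Sum.inr (Sum.inl i)
  parent_root := rfl
  rk := fun v => match v with
    | Sum.inl _ => 0
    | Sum.inr (Sum.inl _) => 1
    | Sum.inr (Sum.inr _) => 2
  rk_lt := by rintro (u | i | ⟨i, j⟩) h
              · cases u; exact absurd rfl h
              · simp
              · simp
  rk_root := by rintro (u | i | s) h
                · cases u; rfl
                · simp at h
                · simp at h

/-- The node `N i` of the reduction tree. -/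
def Nnode (m : ℕ) (a : Fin (3*m) → ℕ) (i : Fin (3*m)) : (redTree m a).V :=
  Sum.inr (Sum.inl i)

lemma chain_upper (B : ℕ) (g : ℕ → ℕ) (h0 : g 0 = 0) (h1 : g 1 ≤ B)
    (hstep : ∀ s, 1 ≤ s → g (s+1) ≤ g (s-1) + B) :
    ∀ s, g s ≤ ((s+1)/2) * B := by
  intro s
  induction s using Nat.strong_induction_on with
  | _ s ih =>
    match s with
    | 0 => simpa using h0.le
    | 1 => simpa using h1
    | (n+2) =>
      have h := hstep (n+1) (by omega)
      simp only [Nat.add_sub_cancel] at h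
      have ihn := ih n (by omega)
      have e : (n+2+1)/2 = (n+1)/2 + 1 := by omega
      calc g (n+2) ≤ g n + B := h
        _ ≤ (n+1)/2*B + B := Nat.add_le_add_right ihn B
        _ = ((n+2+1)/2)*B := by rw [e]; ring

lemma core (m B r : ℕ) (g f : ℕ → ℕ) (hm : 1 ≤ m) (hB : 1 ≤ B)
    (hr2 : 2 ≤ r) (hrle : r ≤ 2*m)
    (hg0 : g 0 = 0) (hg1 : g 1 ≤ B)
    (hgmono : ∀ ⦃s s'⦄, s ≤ s' → g s ≤ g s')
    (hgle : ∀ s, g s ≤ m*B) (hgstab : g (r-1) = m*B) (hfr : f (r-1) = 3*m)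
    (hf0 : ∀ s, f s = 0 → g s = 0) (hf3 : ∀ s, B+1 ≤ g s → 3 ≤ f s)
    (hC : ∀ s, 1 ≤ s → s ≤ r → 3*m*(g (s+1)) + f s ≤ 3*m*B + 3*m + 3*m*(g (s-1))) :
    ∀ k, k ≤ m → g (r + 2*k - 2*m) = k*B := by
  obtain ⟨m, rfl⟩ : ∃ m', m = m'+1 := ⟨m-1, by omega⟩
  have hm3 : 0 < 3*(m+1) := by omega
  have hgr : ∀ s, r-1 ≤ s → g s = (m+1)*B := fun s hs =>
    le_antisymm (hgle s) (hgstab ▸ hgmono hs)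
  -- the key bound at the end
  have hD : m*B ≤ g (r-2) := by
    have h1 := hC (r-1) (by omega) (by omega)
    rw [show r-1+1 = r from by omega, show r-1-1 = r-2 from by omega,
      hgr r (by omega), hfr] at h1
    have key : 3*(m+1)*((m+1)*B) ≤ 3*(m+1)*(B + g (r-2)) := by
      have e : 3*(m+1)*(B + g (r-2)) = 3*(m+1)*B + 3*(m+1)*(g (r-2)) := by ring
      linarith
    have h2 : (m+1)*B ≤ B + g (r-2) := Nat.le_of_mul_le_mul_left key hm3
    have e2 : (m+1)*B = m*B + B := by ring
    linarith
  -- one-step growth bound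
  have hL1 : ∀ s, 1 ≤ s → g (s+1) ≤ g (s-1) + B := by
    intro s hs1
    by_cases hcase : r - 1 ≤ s
    · have h1 : g (s+1) ≤ (m+1)*B := hgle _
      have h2 : m*B ≤ g (s-1) := le_trans hD (hgmono (by omega))
      have e2 : (m+1)*B = m*B + B := by ring
      linarith
    · push_neg at hcase
      by_cases hf' : 1 ≤ f s
      · have hC1 := hC s hs1 (by omega)
        by_contra hcon
        push_neg at hcon
        have hcon' : g (s-1) + B + 1 ≤ g (s+1) := hcon
        have l1 := Nat.mul_le_mul_left (3*(m+1)) hcon'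
        have r1 : 3*(m+1)*(g (s-1) + B + 1)
            = 3*(m+1)*(g (s-1)) + 3*(m+1)*B + 3*(m+1) := by ring
        linarith
      · push_neg at hf'
        have hgs : g s = 0 := hf0 s (by omega)
        have hgs1' : g (s-1) = 0 := by
          have := hgmono (show s-1 ≤ s from by omega); omega
        by_contra hcon
        push_neg at hcon
        have hB1 : B + 1 ≤ g (s+1) := by omega
        have hf3' := hf3 _ hB1
        have hC' := hC (s+1) (by omega) (by omega)
        simp only [Nat.add_sub_cancel] at hC'
        rw [hgs] at hC'
        have hup : B + 1 ≤ g (s+1+1) := le_trans hB1 (hgmono (by omega))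
        have l := Nat.mul_le_mul_left (3*(m+1)) hup
        have r1 : 3*(m+1)*(B+1) = 3*(m+1)*B + 3*(m+1) := by ring
        have r2 : 3*(m+1)*0 = 0 := by ring
        linarith
  have hUpper := chain_upper B g hg0 hg1 hL1
  -- the descending lower bound
  have hL3 : ∀ d, ((m+1)-1-d)*B ≤ g (r-2-2*d) := by
    intro d
    induction d with
    | zero => simpa using hD
    | succ d ih =>
      by_cases hmd : m+1 ≤ d + 2
      · rw [show (m+1)-1-(d+1) = 0 from by omega]
        simp
      · push_neg at hmd
        obtain ⟨K, hK⟩ : ∃ K, (m+1) - 1 - d = K + 2 := ⟨m - 2 - d, by omega⟩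
        rw [hK] at ih
        have hrb : 2*d + 4 ≤ r := by
          by_contra hcon
          push_neg at hcon
          have h1 : g (r-2-2*d) ≤ g 1 := hgmono (by omega)
          have h2 : (K+2)*B ≤ B := le_trans ih (h1.trans hg1)
          have h3 : 2*B ≤ (K+2)*B := Nat.mul_le_mul_right B (by omega)
          linarith
        have e1 : (r-3-2*d) + 1 = r - 2 - 2*d := by omega
        have e2 : (r-3-2*d) - 1 = r - 2 - 2*(d+1) := by omega
        have hfs : 1 ≤ f (r-3-2*d) := by
          by_contra hf'
          push_neg at hf'
          have hgs : g (r-3-2*d) = 0 := hf0 _ (by omega)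
          have hgs1 : B + 1 ≤ g ((r-3-2*d)+1) := by
            rw [e1]
            have h3 : 2*B ≤ (K+2)*B := Nat.mul_le_mul_right B (by omega)
            linarith
          have hf3' := hf3 _ hgs1
          have hC' := hC ((r-3-2*d)+1) (by omega) (by omega)
          simp only [Nat.add_sub_cancel] at hC'
          rw [hgs] at hC'
          have hup : B + 1 ≤ g ((r-3-2*d)+1+1) := le_trans hgs1 (hgmono (by omega))
          have l := Nat.mul_le_mul_left (3*(m+1)) hup
          have r1 : 3*(m+1)*(B+1) = 3*(m+1)*B + 3*(m+1) := by ring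
          linarith
        have hC2 := hC (r-3-2*d) (by omega) (by omega)
        rw [e1, e2] at hC2
        rw [show (m+1)-1-(d+1) = K+1 from by omega]
        by_contra hcon
        push_neg at hcon
        have hcon' : g (r-2-2*(d+1)) + 1 ≤ (K+1)*B := hcon
        have l1 : 3*(m+1)*((K+2)*B) ≤ 3*(m+1)*(g (r-2-2*d)) :=
          Nat.mul_le_mul_left _ ih
        have l2 : 3*(m+1)*(g (r-2-2*(d+1)) + 1) ≤ 3*(m+1)*((K+1)*B) :=
          Nat.mul_le_mul_left _ hcon'
        have r1 : 3*(m+1)*((K+2)*B) = 3*(m+1)*((K+1)*B) + 3*(m+1)*B := by ring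
        have r2 : 3*(m+1)*(g (r-2-2*(d+1)) + 1)
            = 3*(m+1)*(g (r-2-2*(d+1))) + 3*(m+1) := by ring
        linarith
  -- conclusion
  intro k hk
  rcases Nat.eq_zero_or_pos k with rfl | hk1
  · rw [show r + 2*0 - 2*(m+1) = 0 from by omega, hg0]; ring
  rcases eq_or_lt_of_le hk with rfl | hklt
  · rw [show r + 2*(m+1) - 2*(m+1) = r from by omega]
    rw [hgr r (by omega)]
  · have hup := hUpper (r + 2*k - 2*(m+1))
    have e : (r + 2*k - 2*(m+1) + 1)/2 ≤ k := by omega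
    have hup2 : g (r + 2*k - 2*(m+1)) ≤ k*B :=
      le_trans hup (Nat.mul_le_mul_right B e)
    have hlow := hL3 ((m+1)-1-k)
    rw [show (m+1)-1-((m+1)-1-k) = k from by omega,
      show r-2-2*((m+1)-1-k) = r + 2*k - 2*(m+1) from by omega] at hlow
    exact le_antisymm hup2 hlow

section helpers
variable {m B : ℕ} {a : Fin (3*m) → ℕ}

lemma parent_N (m : ℕ) (a : Fin (3*m) → ℕ) (i : Fin (3*m)) :
    (redTree m a).parent (Sum.inr (Sum.inl i)) = Sum.inl () := rfl

lemma parent_leaf (m : ℕ) (a : Fin (3*m) → ℕ) (i : Fin (3*m)) (j : Fin (3*m*a i)) :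
    (redTree m a).parent (Sum.inr (Sum.inr ⟨i, j⟩)) = Sum.inr (Sum.inl i) := rfl

end helpers


/-- If the reduction tree `T(a, B)` admits a schedule on `3mB` processors with
makespan at most `2m+1` and peak memory at most `3mB + 3m`, then the
3-Partition instance has a solution. -/
theorem stmt2 (m B : ℕ) (hm : 1 ≤ m) (hB : 1 ≤ B) (a : Fin (3*m) → ℕ)
    (ha : ∀ i, B < 4 * a i ∧ 2 * a i < B) (hsum : ∑ i, a i = m * B)
    (hsched : ∃ t : (redTree m a).V → ℕ, (redTree m a).IsSchedule (3*m*B) t ∧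
      (redTree m a).makespan t ≤ 2*m + 1 ∧
      (redTree m a).peakMemory t ≤ 3*m*B + 3*m) :
    ∃ S : Fin m → Finset (Fin (3*m)),
      (∀ k, (S k).card = 3) ∧ (∀ i, ∃! k, i ∈ S k) ∧ (∀ k, ∑ i ∈ S k, a i = B) := by
  classical
  obtain ⟨t, ⟨hproc, hprecd⟩, hms, hpm⟩ := hsched
  have hm3 : 0 < 3*m := by omega
  have hai : ∀ i, 1 ≤ a i := fun i => by have := (ha i).1; omega
  set r : ℕ := t (Sum.inl ()) with hrdef
  set G : ℕ → Finset (Fin (3*m)) :=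
    fun s => Finset.univ.filter (fun i => t (Sum.inr (Sum.inl i)) ≤ s) with hGdef
  set g : ℕ → ℕ := fun s => ∑ i ∈ G s, a i with hgdef
  set Lv : ℕ → Finset ((i : Fin (3*m)) × Fin (3*m*a i)) :=
    fun s => Finset.univ.filter (fun σ => t (Sum.inr (Sum.inr σ)) ≤ s) with hLvdef
  -- basic precedence facts
  have hprecN : ∀ i : Fin (3*m), t (Sum.inr (Sum.inl i)) + 1 ≤ r := by
    intro i
    have h := hprecd (Sum.inr (Sum.inl i)) (by exact fun h => by simp [redTree] at h)
    exact h
  have hprecL : ∀ (i : Fin (3*m)) (j : Fin (3*m*a i)),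
      t (Sum.inr (Sum.inr ⟨i, j⟩)) + 1 ≤ t (Sum.inr (Sum.inl i)) := by
    intro i j
    have h := hprecd (Sum.inr (Sum.inr ⟨i, j⟩)) (by exact fun h => by simp [redTree] at h)
    exact h
  have hrms : r + 1 ≤ (redTree m a).makespan t :=
    Finset.le_sup (f := fun i => t i + 1) (Finset.mem_univ (Sum.inl ()))
  have hrle : r ≤ 2*m := by omega
  have hc1 : ∀ i : Fin (3*m), 1 ≤ t (Sum.inr (Sum.inl i)) := by
    intro i
    have := hprecL i ⟨0, Nat.mul_pos hm3 (hai i)⟩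
    omega
  have hr2 : 2 ≤ r := by
    have h1 := hprecN ⟨0, hm3⟩
    have h2 := hc1 ⟨0, hm3⟩
    omega
  -- monotonicity
  have hGmono : ∀ ⦃s s' : ℕ⦄, s ≤ s' → G s ⊆ G s' := by
    intro s s' hss i hi
    simp only [hGdef, Finset.mem_filter, Finset.mem_univ, true_and] at hi ⊢
    omega
  have hgmono : ∀ ⦃s s' : ℕ⦄, s ≤ s' → g s ≤ g s' := by
    intro s s' hss
    exact Finset.sum_le_sum_of_subset (hGmono hss)
  have hG0 : G 0 = ∅ := by
    ext i
    simp only [hGdef, Finset.mem_filter, Finset.mem_univ, true_and, Finset.notMem_empty,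
      iff_false]
    have := hc1 i; omega
  have hg0 : g 0 = 0 := by rw [hgdef]; simp [hG0]
  have hGr1 : ∀ s, r - 1 ≤ s → G s = Finset.univ := by
    intro s hs
    ext i
    simp only [hGdef, Finset.mem_filter, Finset.mem_univ, true_and, iff_true]
    have := hprecN i; omega
  have hgstab : g (r-1) = m*B := by
    rw [hgdef]; simp only []
    rw [hGr1 (r-1) le_rfl]
    exact hsum
  have hfr : (G (r-1)).card = 3*m := by
    rw [hGr1 (r-1) le_rfl]
    simp
  have hgle : ∀ s, g s ≤ m*B := by
    intro s
    rw [← hsum, hgdef]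
    exact Finset.sum_le_sum_of_subset (Finset.subset_univ _)
  have hf0 : ∀ s, (G s).card = 0 → g s = 0 := by
    intro s hs
    rw [hgdef]; simp only []
    rw [Finset.card_eq_zero.mp hs]
    simp
  have hf3 : ∀ s, B + 1 ≤ g s → 3 ≤ (G s).card := by
    intro s hgs
    by_contra h'
    push_neg at h'
    have e1 : ∑ i ∈ G s, (2*a i + 1) = 2*(∑ i ∈ G s, a i) + (G s).card := by
      rw [Finset.sum_add_distrib, Finset.sum_const, smul_eq_mul, mul_one, ← Finset.mul_sum]
    have e2 : ∑ i ∈ G s, (2*a i + 1) ≤ ∑ _i ∈ G s, B :=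
      Finset.sum_le_sum (fun i _ => by have := (ha i).2; omega)
    rw [e1, Finset.sum_const, smul_eq_mul] at e2
    have e3 : (G s).card * B ≤ 2*B := Nat.mul_le_mul_right B (by omega)
    have hS : B + 1 ≤ ∑ i ∈ G s, a i := hgs
    linarith [e2, e3, hS]
  -- counting leaves of a set of groups
  have hsig : ∀ s', ((G s').sigma (fun i => (Finset.univ : Finset (Fin (3*m*a i))))).card
      = 3*m*(g s') := by
    intro s'
    rw [Finset.card_sigma]
    simp only [Finset.card_univ, Fintype.card_fin]
    rw [hgdef]; simp only []
    rw [Finset.mul_sum]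
  -- leaves of finished groups are done
  have hF4 : ∀ s, 3*m*(g (s+1)) ≤ (Lv s).card := by
    intro s
    rw [← hsig (s+1)]
    apply Finset.card_le_card
    rintro ⟨i, j⟩ hij
    simp only [Finset.mem_sigma, hGdef, Finset.mem_filter, Finset.mem_univ, true_and,
      and_true] at hij
    simp only [hLvdef, Finset.mem_filter, Finset.mem_univ, true_and]
    have := hprecL i j
    omega
  -- processor bound at step 0
  have hD0 : (Lv 0).card ≤ 3*m*B := by
    have hsub : (Lv 0).image (fun σ => (Sum.inr (Sum.inr σ) : (redTree m a).V))
        ⊆ (Finset.univ : Finset (redTree m a).V).filter (fun v => t v = 0) := by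
      intro v hv
      simp only [Finset.mem_image, hLvdef, Finset.mem_filter, Finset.mem_univ, true_and] at hv ⊢
      obtain ⟨σ, hσ, rfl⟩ := hv
      exact Finset.mem_filter.mpr ⟨Finset.mem_univ _, by omega⟩
    have h1 := Finset.card_le_card hsub
    rw [Finset.card_image_of_injective _ (fun x y hxy => by simpa using hxy)] at h1
    exact le_trans h1 (le_of_eq_of_le (by congr) (hproc 0))
  have hg1 : g 1 ≤ B := by
    have h1 := hF4 0
    have := le_trans h1 hD0
    exact Nat.le_of_mul_le_mul_left this hm3
  -- the memory bound
  have hmemLB : ∀ s, s ≤ r → (Lv s).card + (G s).card ≤ 3*m*B + 3*m + 3*m*(g (s-1)) := by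
    intro s hsr
    have hsm : s < (redTree m a).makespan t := by omega
    have hmem_le : (redTree m a).memAt t s ≤ 3*m*B + 3*m :=
      le_trans (Finset.le_sup (Finset.mem_range.mpr hsm)) hpm
    set Alive := (Lv s).filter (fun σ => s ≤ t (Sum.inr (Sum.inl σ.1))) with hAdef
    set Dead := (Lv s).filter (fun σ => ¬ s ≤ t (Sum.inr (Sum.inl σ.1))) with hDdef
    have hsplit : Alive.card + Dead.card = (Lv s).card :=
      Finset.card_filter_add_card_filter_not _
    have hDead : Dead.card ≤ 3*m*(g (s-1)) := by
      rw [← hsig (s-1)]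
      apply Finset.card_le_card
      rintro ⟨i, j⟩ hij
      simp only [hDdef, Finset.mem_filter, hLvdef, Finset.mem_univ, true_and] at hij
      simp only [Finset.mem_sigma, hGdef, Finset.mem_filter, Finset.mem_univ, true_and,
        and_true]
      omega
    have hAlive : Alive.card + (G s).card ≤ (redTree m a).memAt t s := by
      have himg : ((G s).image (fun i => (Sum.inr (Sum.inl i) : (redTree m a).V))
            ∪ Alive.image (fun σ => (Sum.inr (Sum.inr σ) : (redTree m a).V)))
          ⊆ (Finset.univ : Finset (redTree m a).V).filter (fun v : (redTree m a).V =>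
              t v ≤ s ∧ (v = (redTree m a).root ∨ s ≤ t ((redTree m a).parent v))) := by
        intro v hv
        simp only [Finset.mem_union, Finset.mem_image] at hv
        rcases hv with ⟨i, hi, rfl⟩ | ⟨σ, hσ, rfl⟩
        · simp only [hGdef, Finset.mem_filter, Finset.mem_univ, true_and] at hi
          refine Finset.mem_filter.mpr ⟨Finset.mem_univ _, ?_⟩
          refine ⟨hi, Or.inr ?_⟩
          rw [parent_N]
          exact hsr
        · obtain ⟨i, j⟩ := σ
          simp only [hAdef, Finset.mem_filter, hLvdef, Finset.mem_univ, true_and] at hσ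
          refine Finset.mem_filter.mpr ⟨Finset.mem_univ _, ?_⟩
          refine ⟨hσ.1, Or.inr ?_⟩
          rw [parent_leaf]
          exact hσ.2
      have hdisj : Disjoint ((G s).image (fun i => (Sum.inr (Sum.inl i) : (redTree m a).V)))
          (Alive.image (fun σ => (Sum.inr (Sum.inr σ) : (redTree m a).V))) := by
        simp only [Finset.disjoint_left, Finset.mem_image]
        rintro v ⟨i, hi, rfl⟩ ⟨σ, hσ, hv⟩
        simp at hv
      have hcards := Finset.card_union_of_disjoint hdisj
      rw [Finset.card_image_of_injective _ (fun x y hxy => by simpa using hxy),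
        Finset.card_image_of_injective _ (fun x y hxy => by simpa using hxy)] at hcards
      have hle := Finset.card_le_card himg
      rw [hcards] at hle
      have hw : _ ≤ (redTree m a).memAt t s := hle.trans_eq (by unfold InTree.memAt; congr)
      omega
    have : (redTree m a).memAt t s ≤ 3*m*B + 3*m := hmem_le
    linarith
  -- the combined inequality
  have hC : ∀ s, 1 ≤ s → s ≤ r →
      3*m*(g (s+1)) + (G s).card ≤ 3*m*B + 3*m + 3*m*(g (s-1)) := by
    intro s h1 h2
    have := hF4 s
    have := hmemLB s h2
    linarith
  -- apply the arithmetic core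
  have hsk : ∀ k, k ≤ m → g (r + 2*k - 2*m) = k*B :=
    core m B r g (fun s => (G s).card) hm hB hr2 hrle hg0 hg1 hgmono hgle hgstab hfr hf0 hf3 hC
  -- index bookkeeping
  have hGlast : G (r + 2*m - 2*m) = Finset.univ := by
    rw [show r + 2*m - 2*m = r from by omega]
    exact hGr1 r (by omega)
  have hG0' : ∀ k : ℕ, k = 0 → G (r + 2*k - 2*m) = ∅ := by
    intro k hk
    rw [hk, show r + 2*0 - 2*m = 0 from by omega]
    exact hG0
  have hsums : ∀ k : Fin m,
      ∑ i ∈ G (r + 2*((k:ℕ)+1) - 2*m) \ G (r + 2*(k:ℕ) - 2*m), a i = B := by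
    intro k
    have hsub : G (r + 2*(k:ℕ) - 2*m) ⊆ G (r + 2*((k:ℕ)+1) - 2*m) := hGmono (by omega)
    have hsd := Finset.sum_sdiff (f := a) hsub
    have h1 : ∑ i ∈ G (r + 2*(k:ℕ) - 2*m), a i = (k:ℕ)*B := hsk k (by omega)
    have h2 : ∑ i ∈ G (r + 2*((k:ℕ)+1) - 2*m), a i = ((k:ℕ)+1)*B := by
      have := k.isLt
      exact hsk ((k:ℕ)+1) (by omega)
    have e : ((k:ℕ)+1)*B = (k:ℕ)*B + B := by ring
    rw [h1, h2, e] at hsd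
    omega
  refine ⟨fun k => G (r + 2*((k:ℕ)+1) - 2*m) \ G (r + 2*(k:ℕ) - 2*m), ?_, ?_, hsums⟩
  · -- cards are 3
    intro k
    show (G (r + 2*((k:ℕ)+1) - 2*m) \ G (r + 2*(k:ℕ) - 2*m)).card = 3
    set Sk := G (r + 2*((k:ℕ)+1) - 2*m) \ G (r + 2*(k:ℕ) - 2*m) with hSkdef
    have hsumB : ∑ i ∈ Sk, a i = B := hsums k
    have e1 : ∑ i ∈ Sk, (2*a i + 1) = 2*B + Sk.card := by
      rw [Finset.sum_add_distrib, Finset.sum_const, smul_eq_mul, mul_one, ← Finset.mul_sum,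
        hsumB]
    have e2 : ∑ i ∈ Sk, (2*a i + 1) ≤ ∑ _i ∈ Sk, B :=
      Finset.sum_le_sum (fun i _ => by have := (ha i).2; omega)
    rw [e1, Finset.sum_const, smul_eq_mul] at e2
    have e3 : ∑ _i ∈ Sk, (B+1) ≤ ∑ i ∈ Sk, (4*a i) :=
      Finset.sum_le_sum (fun i _ => by have := (ha i).1; omega)
    rw [Finset.sum_const, smul_eq_mul, ← Finset.mul_sum, hsumB] at e3
    have hle3 : Sk.card ≤ 3 := by
      by_contra h'
      push_neg at h'
      have : 4*(B+1) ≤ Sk.card*(B+1) := Nat.mul_le_mul_right (B+1) (by omega)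
      linarith
    have hge3 : 3 ≤ Sk.card := by
      by_contra h'
      push_neg at h'
      have h4 : Sk.card*B ≤ 2*B := Nat.mul_le_mul_right B (by omega)
      have h5 : Sk.card = 0 := by linarith
      rw [h5] at e2
      simp at e2
      omega
    omega
  · -- unique membership
    intro i
    have hiU : i ∈ G (r + 2*m - 2*m) := by rw [hGlast]; exact Finset.mem_univ i
    have hex : ∃ n, i ∈ G (r + 2*n - 2*m) := ⟨m, hiU⟩
    have hK := Nat.find_spec hex
    have hKle : Nat.find hex ≤ m := Nat.find_min' hex hiU
    have hK1 : 1 ≤ Nat.find hex := by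
      rcases Nat.eq_zero_or_pos (Nat.find hex) with h0 | h
      · exfalso
        rw [h0, show r + 2*0 - 2*m = 0 from by omega, hG0] at hK
        simp at hK
      · exact h
    refine ⟨⟨Nat.find hex - 1, by omega⟩, ?_, ?_⟩
    · simp only [Finset.mem_sdiff]
      constructor
      · rw [show Nat.find hex - 1 + 1 = Nat.find hex from by omega]
        exact hK
      · exact Nat.find_min hex (by omega)
    · rintro k' hk'
      simp only [Finset.mem_sdiff] at hk'
      obtain ⟨hin, hnotin⟩ := hk'
      have hle : Nat.find hex ≤ (k':ℕ)+1 := Nat.find_min' hex hin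
      have hgt : ¬ (Nat.find hex ≤ (k':ℕ)) := by
        intro hle'
        exact hnotin (hGmono (by omega) hK)
      apply Fin.ext
      simp only []
      omega
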